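/- Let n, k be integers with n ≥ 2k and k ≥ 1, and let i be an integer with 0 ≤ i < k. Then the chromatic number of G_i(n,k) is at most n − 2k + 2. -/

import Mathlib

/-- The involution on `ℕ` swapping `2j ↔ 2j+1` for `j < i`. -/
def sigmaNat (i : ℕ) (x : ℕ) : ℕ :=
  if x < 2 * i then (if x % 2 = 0 then x + 1 else x - 1) else x

lemma sigmaNat_invol (i : ℕ) : Function.Involutive (sigmaNat i) := by
  intro x; unfold sigmaNat; split_ifs <;> omega

/-- `sigmaNat` restricted to `Fin n` (the identity in the out-of-range degenerate case,
which never occurs when `2 * i ≤ n`). -/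
def sigmaFinFun (n i : ℕ) (x : Fin n) : Fin n :=
  if h : sigmaNat i x.val < n then ⟨sigmaNat i x.val, h⟩ else x

lemma sigmaFinFun_invol (n i : ℕ) : Function.Involutive (sigmaFinFun n i) := by
  intro x
  unfold sigmaFinFun
  by_cases h : sigmaNat i x.val < n
  · rw [dif_pos h]
    have h2 : sigmaNat i ((⟨sigmaNat i x.val, h⟩ : Fin n) : ℕ) < n := by
      show sigmaNat i (sigmaNat i x.val) < n
      rw [sigmaNat_invol]; exact x.isLt
    rw [dif_pos h2]
    ext
    exact sigmaNat_invol i x.val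
  · rw [dif_neg h, dif_neg h]

/-- The permutation `σ_i = (1 2)(3 4)⋯(2i-1 2i)` of `[n]`, in `0`-indexed form on `Fin n`:
it swaps `2j ↔ 2j+1` for `j < i` and fixes everything else (assuming `2 * i ≤ n`). -/
def sigmaPerm (n i : ℕ) : Equiv.Perm (Fin n) :=
  Function.Involutive.toPerm _ (sigmaFinFun_invol n i)

/-- The graph `G_i(n,k)`: vertices are the `k`-subsets of `[n]`, with `v` adjacent to `w`
iff `v ∩ σ_i(w) = ∅`. -/
def GGraph (n k i : ℕ) : SimpleGraph {s : Finset (Fin n) // s.card = k} where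
  Adj v w := v ≠ w ∧ Disjoint v.1 (w.1.image (sigmaPerm n i))
  symm := ⟨by
    rintro v w ⟨h1, h2⟩
    refine ⟨h1.symm, ?_⟩
    rw [Finset.disjoint_left] at h2 ⊢
    intro a haw hav
    rcases Finset.mem_image.mp hav with ⟨b, hbv, hba⟩
    refine h2 hbv (Finset.mem_image.mpr ⟨a, haw, ?_⟩)
    rw [← hba]
    exact (sigmaFinFun_invol n i) b⟩
  loopless := ⟨fun _ h => h.1 rfl⟩

lemma sigmaNat_lt_of_lt {i x : ℕ} (h : x < 2*i) : sigmaNat i x < 2*i := by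
  unfold sigmaNat; split_ifs <;> omega

lemma sigmaNat_eq_of_ge {i x : ℕ} (h : 2*i ≤ x) : sigmaNat i x = x := by
  unfold sigmaNat; split_ifs <;> omega

lemma sigmaPerm_val {n i : ℕ} (h2i : 2*i ≤ n) (x : Fin n) :
    ((sigmaPerm n i x : Fin n) : ℕ) = sigmaNat i x.val := by
  show ((sigmaFinFun n i x : Fin n) : ℕ) = _
  unfold sigmaFinFun
  have hlt : sigmaNat i x.val < n := by
    by_cases hx : x.val < 2*i
    · exact lt_of_lt_of_le (sigmaNat_lt_of_lt hx) h2i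
    · rw [sigmaNat_eq_of_ge (by omega)]; exact x.isLt
  rw [dif_pos hlt]

lemma fixed_mem_image {n i : ℕ} (h2i : 2*i ≤ n) {w : Finset (Fin n)} {x : Fin n}
    (hx : x ∈ w) (hge : 2*i ≤ (x:ℕ)) : x ∈ w.image (sigmaPerm n i) := by
  refine Finset.mem_image.mpr ⟨x, hx, ?_⟩
  apply Fin.val_injective
  rw [sigmaPerm_val h2i]
  exact sigmaNat_eq_of_ge hge

lemma card_filter_val_lt (n m : ℕ) :
    (Finset.univ.filter (fun x : Fin n => (x:ℕ) < m)).card ≤ m := by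
  rw [← Finset.card_range m]
  apply Finset.card_le_card_of_injOn (fun x : Fin n => (x:ℕ))
  · intro a ha
    simp only [Finset.mem_coe, Finset.mem_filter, Finset.mem_univ, true_and] at ha
    simpa using ha
  · intro a _ b _ h
    exact Fin.val_injective h

lemma card_filter_val_ge (n m : ℕ) :
    (Finset.univ.filter (fun x : Fin n => m ≤ (x:ℕ))).card ≤ n - m := by
  rw [← Finset.card_range (n - m)]
  apply Finset.card_le_card_of_injOn (fun x : Fin n => (x:ℕ) - m)
  · intro a ha
    simp only [Finset.mem_coe, Finset.mem_filter, Finset.mem_univ, true_and] at ha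
    simp only [Finset.mem_coe, Finset.mem_range]
    have := a.isLt
    omega
  · intro a ha b hb h
    simp only [Finset.mem_coe, Finset.mem_filter, Finset.mem_univ, true_and] at ha hb
    simp only at h
    apply Fin.val_injective
    omega

/-- for `n ≥ 2k`, `k ≥ 1`, `0 ≤ i < k`, the chromatic number of `G_i(n,k)`
is at most `n - 2k + 2`. -/
theorem chromaticNumber_GGraph_le (n k i : ℕ) (hn : 2 * k ≤ n) (hk : 1 ≤ k)
    (hi : i < k) :
    (GGraph n k i).chromaticNumber ≤ ((n - 2 * k + 2 : ℕ) : ℕ∞) := by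
  classical
  set M := n - 2*k + 1 with hM
  have h2i : 2*i ≤ n := by omega
  have key : (GGraph n k i).Colorable (M+1) := by
    set T : {s : Finset (Fin n) // s.card = k} → Finset (Fin n) :=
      fun v => v.1.filter (fun x => 2*i ≤ (x:ℕ) ∧ (x:ℕ) < 2*i + M) with hT
    refine ⟨SimpleGraph.Coloring.mk
      (fun v => if h : (T v).Nonempty then
        ⟨((T v).min' h : ℕ) - 2*i, by
          have hmem := Finset.mem_filter.mp ((T v).min'_mem h)
          omega⟩
      else ⟨M, by omega⟩) ?_⟩
    intro v w hadj hc
    obtain ⟨hne, hdisj⟩ := (hadj : v ≠ w ∧ Disjoint v.1 (w.1.image (sigmaPerm n i)))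
    by_cases hv : (T v).Nonempty <;> by_cases hw : (T w).Nonempty
    · -- both nonempty: common fixed element
      rw [dif_pos hv, dif_pos hw] at hc
      have hxmem := Finset.mem_filter.mp ((T v).min'_mem hv)
      have hymem := Finset.mem_filter.mp ((T w).min'_mem hw)
      simp only [Fin.mk.injEq] at hc
      have hxy : (((T v).min' hv : Fin n) : ℕ) = (((T w).min' hw : Fin n) : ℕ) := by
        omega
      have hxyF : (T v).min' hv = (T w).min' hw := Fin.val_injective hxy
      refine Finset.disjoint_left.mp hdisj hxmem.1 ?_
      rw [hxyF]
      exact fixed_mem_image h2i hymem.1 hymem.2.1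
    · rw [dif_pos hv, dif_neg hw] at hc
      have hxmem := Finset.mem_filter.mp ((T v).min'_mem hv)
      simp only [Fin.mk.injEq] at hc
      omega
    · rw [dif_neg hv, dif_pos hw] at hc
      have hxmem := Finset.mem_filter.mp ((T w).min'_mem hw)
      simp only [Fin.mk.injEq] at hc
      omega
    · -- both empty
      rw [Finset.not_nonempty_iff_eq_empty, hT, Finset.filter_eq_empty_iff] at hv hw
      set Pv := v.1.filter (fun x : Fin n => (x:ℕ) < 2*i) with hPv
      set Fv := v.1.filter (fun x : Fin n => ¬ ((x:ℕ) < 2*i)) with hFv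
      set Pw := w.1.filter (fun x : Fin n => (x:ℕ) < 2*i) with hPw
      set Fw := w.1.filter (fun x : Fin n => ¬ ((x:ℕ) < 2*i)) with hFw
      by_cases hFd : Disjoint Fv Fw
      · -- pigeonhole on pairs
        have hcardv : Pv.card + Fv.card = k := by
          rw [hPv, hFv, Finset.card_filter_add_card_filter_not, v.2]
        have hcardw : Pw.card + Fw.card = k := by
          rw [hPw, hFw, Finset.card_filter_add_card_filter_not, w.2]
        -- Fv, Fw ⊆ {x : 2i+M ≤ x}
        have hFvsub : Fv ⊆ Finset.univ.filter (fun x : Fin n => 2*i + M ≤ (x:ℕ)) := by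
          intro x hx
          rw [hFv, Finset.mem_filter] at hx
          have := hv hx.1
          simp only [Finset.mem_filter, Finset.mem_univ, true_and]
          omega
        have hFwsub : Fw ⊆ Finset.univ.filter (fun x : Fin n => 2*i + M ≤ (x:ℕ)) := by
          intro x hx
          rw [hFw, Finset.mem_filter] at hx
          have := hw hx.1
          simp only [Finset.mem_filter, Finset.mem_univ, true_and]
          omega
        have hFcard : Fv.card + Fw.card ≤ n - (2*i + M) := by
          have h1 : (Fv ∪ Fw).card ≤ (Finset.univ.filter (fun x : Fin n => 2*i + M ≤ (x:ℕ))).card :=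
            Finset.card_le_card (Finset.union_subset hFvsub hFwsub)
          have h2 := card_filter_val_ge n (2*i + M)
          have h3 := Finset.card_union_of_disjoint hFd
          omega
        -- Pv and σ(Pw) both live among the 2i paired elements and are disjoint
        have hPd : Disjoint Pv (Pw.image (sigmaPerm n i)) := by
          apply Finset.disjoint_of_subset_left (Finset.filter_subset _ _)
          apply Finset.disjoint_of_subset_right (Finset.image_subset_image (Finset.filter_subset _ _))
          exact hdisj
        have hPvsub : Pv ⊆ Finset.univ.filter (fun x : Fin n => (x:ℕ) < 2*i) := by
          intro x hx
          rw [hPv, Finset.mem_filter] at hx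
          simp only [Finset.mem_filter, Finset.mem_univ, true_and]
          exact hx.2
        have hPwsub : Pw.image (sigmaPerm n i) ⊆
            Finset.univ.filter (fun x : Fin n => (x:ℕ) < 2*i) := by
          intro x hx
          rcases Finset.mem_image.mp hx with ⟨b, hb, hbx⟩
          rw [hPw, Finset.mem_filter] at hb
          simp only [Finset.mem_filter, Finset.mem_univ, true_and]
          rw [← hbx, sigmaPerm_val h2i]
          exact sigmaNat_lt_of_lt hb.2
        have hPcard : Pv.card + Pw.card ≤ 2*i := by
          have h1 : (Pv ∪ Pw.image (sigmaPerm n i)).card ≤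
              (Finset.univ.filter (fun x : Fin n => (x:ℕ) < 2*i)).card :=
            Finset.card_le_card (Finset.union_subset hPvsub hPwsub)
          have h2 := card_filter_val_lt n (2*i)
          have h3 := Finset.card_union_of_disjoint hPd
          have h4 : (Pw.image (sigmaPerm n i)).card = Pw.card :=
            Finset.card_image_of_injective _ (Equiv.injective _)
          omega
        omega
      · -- common large fixed element
        rcases Finset.not_disjoint_iff.mp hFd with ⟨x, hxv, hxw⟩
        rw [hFv, Finset.mem_filter] at hxv
        rw [hFw, Finset.mem_filter] at hxw
        exact Finset.disjoint_left.mp hdisj hxv.1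
          (fixed_mem_image h2i hxw.1 (by omega))
  have h := key.chromaticNumber_le
  rwa [show M + 1 = n - 2*k + 2 by omega] at h
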